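/- Let f : ℍ → ℍ be of class C¹ on an open set of quaternions with nonzero imaginary part, let p = t + r·ι(α,β) with r > 0 and sin β ≠ 0, and define F(t,r,α,β) = f(t + r·ι(α,β)). Then the left Fueter operator satisfies (D_l f)(p) = ∂F/∂t + ι(α,β)·(∂F/∂r) − (1/r)·(∂F/∂ιₗ). -/

import Mathlib

open Quaternion

noncomputable section

/-- The basis quaternion `i`. -/
def qi : ℍ[ℝ] := ⟨0,1,0,0⟩
/-- The basis quaternion `j`. -/
def qj : ℍ[ℝ] := ⟨0,0,1,0⟩
/-- The basis quaternion `k`. -/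
def qk : ℍ[ℝ] := ⟨0,0,0,1⟩

/-- Partial derivative of `f : ℍ → ℍ` in the real (`t`) direction. -/
def pt (f : ℍ[ℝ] → ℍ[ℝ]) (p : ℍ[ℝ]) : ℍ[ℝ] := fderiv ℝ f p 1
/-- Partial derivative in the `i` (`x`) direction. -/
def px (f : ℍ[ℝ] → ℍ[ℝ]) (p : ℍ[ℝ]) : ℍ[ℝ] := fderiv ℝ f p qi
/-- Partial derivative in the `j` (`y`) direction. -/
def py (f : ℍ[ℝ] → ℍ[ℝ]) (p : ℍ[ℝ]) : ℍ[ℝ] := fderiv ℝ f p qj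
/-- Partial derivative in the `k` (`z`) direction. -/
def pz (f : ℍ[ℝ] → ℍ[ℝ]) (p : ℍ[ℝ]) : ℍ[ℝ] := fderiv ℝ f p qk

/-- The left Fueter operator `D_l f = ∂f/∂t + i ∂f/∂x + j ∂f/∂y + k ∂f/∂z`. -/
def Dl (f : ℍ[ℝ] → ℍ[ℝ]) (p : ℍ[ℝ]) : ℍ[ℝ] :=
  pt f p + qi * px f p + qj * py f p + qk * pz f p
/-- The right Fueter operator `D_r f = ∂f/∂t + (∂f/∂x) i + (∂f/∂y) j + (∂f/∂z) k`. -/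
def Dr (f : ℍ[ℝ] → ℍ[ℝ]) (p : ℍ[ℝ]) : ℍ[ℝ] :=
  pt f p + px f p * qi + py f p * qj + pz f p * qk
/-- The conjugate left Fueter operator `D̄_l f = ∂f/∂t - i ∂f/∂x - j ∂f/∂y - k ∂f/∂z`. -/
def Dlbar (f : ℍ[ℝ] → ℍ[ℝ]) (p : ℍ[ℝ]) : ℍ[ℝ] :=
  pt f p - qi * px f p - qj * py f p - qk * pz f p
/-- The Laplacian `Δf = ∂²f/∂t² + ∂²f/∂x² + ∂²f/∂y² + ∂²f/∂z²`. -/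
def Lap (f : ℍ[ℝ] → ℍ[ℝ]) (p : ℍ[ℝ]) : ℍ[ℝ] :=
  pt (pt f) p + px (px f) p + py (py f) p + pz (pz f) p

/-- `r = √(x² + y² + z²)`, the norm of the imaginary part of `p`. -/
def rad (p : ℍ[ℝ]) : ℝ := Real.sqrt (p.imI^2 + p.imJ^2 + p.imK^2)
/-- `ι(p) = (x i + y j + z k)/r`, the normalized imaginary part of `p`. -/
def iot (p : ℍ[ℝ]) : ℍ[ℝ] := (rad p)⁻¹ • Quaternion.im p

/-- `ι(α,β) = cos α sin β · i + sin α sin β · j + cos β · k`, a unit imaginary quaternion. -/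
def iota (α β : ℝ) : ℍ[ℝ] :=
  ⟨0, Real.cos α * Real.sin β, Real.sin α * Real.sin β, Real.cos β⟩
/-- `ι_α = ∂ι/∂α`. -/
def iotaA (α β : ℝ) : ℍ[ℝ] := deriv (fun a => iota a β) α
/-- `ι_β = ∂ι/∂β`. -/
def iotaB (α β : ℝ) : ℍ[ℝ] := deriv (fun b => iota α b) β

/-- Partial derivative in `α` of a quaternion-valued function of `(α,β)`. -/
def pA (g : ℝ → ℝ → ℍ[ℝ]) (α β : ℝ) : ℍ[ℝ] := deriv (fun a => g a β) α
/-- Partial derivative in `β` of a quaternion-valued function of `(α,β)`. -/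
def pB (g : ℝ → ℝ → ℍ[ℝ]) (α β : ℝ) : ℍ[ℝ] := deriv (fun b => g α b) β
/-- The left angular derivative `∂g/∂ιₗ := ι_α⁻¹ (∂g/∂α) + ι_β⁻¹ (∂g/∂β)`. -/
def DI (g : ℝ → ℝ → ℍ[ℝ]) (α β : ℝ) : ℍ[ℝ] :=
  (iotaA α β)⁻¹ * pA g α β + (iotaB α β)⁻¹ * pB g α β

set_option maxHeartbeats 1000000

lemma iota_lin (α β : ℝ) : iota α β
    = (Real.cos α * Real.sin β) • qi + (Real.sin α * Real.sin β) • qj + (Real.cos β) • qk := by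
  ext <;> simp [iota] <;> simp [qi, qj, qk]

lemma hasDerivA (α β : ℝ) : HasDerivAt (fun a => iota a β)
    ((-Real.sin α * Real.sin β) • qi + (Real.cos α * Real.sin β) • qj) α := by
  simp only [fun a => iota_lin a β]
  have h1 := ((Real.hasDerivAt_cos α).mul_const (Real.sin β)).smul_const qi
  have h2 := ((Real.hasDerivAt_sin α).mul_const (Real.sin β)).smul_const qj
  simpa using (h1.add h2).add_const ((Real.cos β) • qk)

lemma hasDerivB (α β : ℝ) : HasDerivAt (fun b => iota α b)
    ((Real.cos α * Real.cos β) • qi + (Real.sin α * Real.cos β) • qj + (-Real.sin β) • qk) β := by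
  simp only [fun b => iota_lin α b]
  have h1 := ((Real.hasDerivAt_sin β).const_mul (Real.cos α)).smul_const qi
  have h2 := ((Real.hasDerivAt_sin β).const_mul (Real.sin α)).smul_const qj
  have h3 := (Real.hasDerivAt_cos β).smul_const qk
  exact (h1.add h2).add h3

lemma iotaA_eq (α β : ℝ) : iotaA α β
    = (-Real.sin α * Real.sin β) • qi + (Real.cos α * Real.sin β) • qj :=
  (hasDerivA α β).deriv

lemma iotaB_eq (α β : ℝ) : iotaB α β
    = (Real.cos α * Real.cos β) • qi + (Real.sin α * Real.cos β) • qj + (-Real.sin β) • qk :=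
  (hasDerivB α β).deriv

lemma iotaA_inv (α β : ℝ) (hβ : Real.sin β ≠ 0) :
    (iotaA α β)⁻¹ = (-(Real.sin β^2)⁻¹) • iotaA α β := by
  apply inv_eq_of_mul_eq_one_right
  rw [iotaA_eq]
  ext <;> simp [mul_smul_comm, smul_mul_assoc] <;> simp [qi, qj] <;>
    field_simp <;>
    nlinarith [Real.sin_sq_add_cos_sq α, Real.sin_sq_add_cos_sq β]


lemma iotaB_inv (α β : ℝ) : (iotaB α β)⁻¹ = -iotaB α β := by
  apply inv_eq_of_mul_eq_one_right
  rw [iotaB_eq]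
  ext <;> simp [mul_smul_comm, smul_mul_assoc] <;> simp [qi, qj, qk] <;>
    nlinarith [Real.sin_sq_add_cos_sq α, Real.sin_sq_add_cos_sq β]


/-- For `f : ℍ → ℍ` of class `C¹` on an open set of quaternions with nonzero
imaginary part, writing `p = t + r ι(α,β)` with `r > 0` and `sin β ≠ 0`, and
`F(t,r,α,β) = f(t + r ι(α,β))`, the left Fueter operator in the coordinates `(t,r,α,β)` is
`D_l f = ∂F/∂t + ι ∂F/∂r - (1/r) ∂F/∂ιₗ`. -/
theorem fueter_operator_spherical (Ω : Set ℍ[ℝ]) (hΩ : IsOpen Ω)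
    (hΩim : ∀ p ∈ Ω, Quaternion.im p ≠ 0)
    (f : ℍ[ℝ] → ℍ[ℝ]) (hf : ContDiffOn ℝ 1 f Ω)
    (t r α β : ℝ) (hr : 0 < r) (hβ : Real.sin β ≠ 0)
    (hp : (t : ℍ[ℝ]) + r • iota α β ∈ Ω) :
    Dl f ((t : ℍ[ℝ]) + r • iota α β)
      = deriv (fun s : ℝ => f ((s : ℍ[ℝ]) + r • iota α β)) t
        + iota α β * deriv (fun s : ℝ => f ((t : ℍ[ℝ]) + s • iota α β)) r
        - r⁻¹ • ((iotaA α β)⁻¹ * deriv (fun a => f ((t : ℍ[ℝ]) + r • iota a β)) α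
                 + (iotaB α β)⁻¹ * deriv (fun b => f ((t : ℍ[ℝ]) + r • iota α b)) β) := by
  set p : ℍ[ℝ] := (t : ℍ[ℝ]) + r • iota α β with hpdef
  have hdf : DifferentiableAt ℝ f p :=
    ((hf.differentiableOn one_ne_zero).differentiableAt (hΩ.mem_nhds hp))
  set L := fderiv ℝ f p with hL
  have hF := hdf.hasFDerivAt
  have hcoe : HasDerivAt (fun s : ℝ => (s : ℍ[ℝ])) 1 t := by
    have : (fun s : ℝ => (s : ℍ[ℝ])) = fun s => s • (1:ℍ[ℝ]) := by
      funext s; ext <;> simp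
    rw [this]
    have h := (hasDerivAt_id' t).smul_const (1 : ℍ[ℝ])
    rw [one_smul] at h
    exact h
  have h1 : HasDerivAt (fun s : ℝ => ((s : ℍ[ℝ]) + r • iota α β)) 1 t :=
    hcoe.add_const _
  have d1 : deriv (fun s : ℝ => f ((s : ℍ[ℝ]) + r • iota α β)) t = L 1 :=
    (hF.comp_hasDerivAt t h1).deriv
  have h2 : HasDerivAt (fun s : ℝ => ((t : ℍ[ℝ]) + s • iota α β)) (iota α β) r := by
    simpa using ((hasDerivAt_id r).smul_const (iota α β)).const_add (t : ℍ[ℝ])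
  have d2 : deriv (fun s : ℝ => f ((t : ℍ[ℝ]) + s • iota α β)) r = L (iota α β) :=
    (hF.comp_hasDerivAt r h2).deriv
  have h3 : HasDerivAt (fun a => ((t : ℍ[ℝ]) + r • iota a β)) (r • iotaA α β) α := by
    rw [iotaA_eq]
    exact ((hasDerivA α β).const_smul r).const_add _
  have d3 : deriv (fun a => f ((t : ℍ[ℝ]) + r • iota a β)) α = L (r • iotaA α β) :=
    (hF.comp_hasDerivAt α h3).deriv
  have h4 : HasDerivAt (fun b => ((t : ℍ[ℝ]) + r • iota α b)) (r • iotaB α β) β := by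
    rw [iotaB_eq]
    exact ((hasDerivB α β).const_smul r).const_add _
  have d4 : deriv (fun b => f ((t : ℍ[ℝ]) + r • iota α b)) β = L (r • iotaB α β) :=
    (hF.comp_hasDerivAt β h4).deriv
  rw [d1, d2, d3, d4, iotaA_inv α β hβ, iotaB_inv α β]
  show L 1 + qi * L qi + qj * L qj + qk * L qk = _
  rw [iota_lin, iotaA_eq, iotaB_eq]
  simp only [map_add, map_smul, map_neg, add_mul, smul_mul_assoc, mul_add, mul_smul_comm, smul_smul,
    neg_mul, mul_neg, smul_add, neg_smul, smul_neg, neg_add, neg_neg]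
  match_scalars <;> field_simp <;>
    (first
      | linear_combination (-(r*Real.sin β^2*r)) * Real.sin_sq_add_cos_sq α
          + (-(r*Real.sin β^2*r*Real.cos α^2)) * Real.sin_sq_add_cos_sq β
      | linear_combination (-(r*Real.sin β^2*r)) * Real.sin_sq_add_cos_sq α
          + (-(r*Real.sin β^2*r*Real.sin α^2)) * Real.sin_sq_add_cos_sq β
      | linear_combination (r*Real.sin β^2*r) * Real.sin_sq_add_cos_sq α
          + (r*Real.sin β^2*r*Real.cos α^2) * Real.sin_sq_add_cos_sq β
      | linear_combination (r*Real.sin β^2*r) * Real.sin_sq_add_cos_sq α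
          + (r*Real.sin β^2*r*Real.sin α^2) * Real.sin_sq_add_cos_sq β
      | linear_combination (-(r*r*Real.sin β^2*Real.cos α*Real.sin α)) * Real.sin_sq_add_cos_sq β
      | linear_combination (r*r*Real.sin β^2*Real.cos α*Real.sin α) * Real.sin_sq_add_cos_sq β
      | linear_combination (-(Real.cos α * Real.sin α)) * Real.sin_sq_add_cos_sq β
      | nlinarith [Real.sin_sq_add_cos_sq α, Real.sin_sq_add_cos_sq β])
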